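/- Let γ ∈ [0, 1), A ≥ 0, B ≥ 0 be real numbers, let w ≥ 1, L ≥ 0, N be natural numbers with N ≥ (L+1) · w, and let b : ℕ → ℝ satisfy 0 ≤ b_i ≤ B for all i ≤ N. Suppose that for every natural number t with N − L·w < t ≤ N we have b_t ≤ A + γ · max_{t−w ≤ i ≤ t−1} b_i. Then b_N ≤ A / (1 − γ) + γ^L · B. -/
import Mathlib

private lemma windowed_aux
    (γ A B : ℝ) (hγ_nonneg : 0 ≤ γ) (hγ_lt : γ < 1)
    (hA : 0 ≤ A) (hB : 0 ≤ B)
    (w : ℕ) (hw : 1 ≤ w) (b : ℕ → ℝ) :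
    ∀ L N : ℕ, (L + 1) * w ≤ N →
      (∀ i ≤ N, 0 ≤ b i ∧ b i ≤ B) →
      (∀ t : ℕ, N - L * w < t → t ≤ N →
        b t ≤ A + γ * (Finset.Icc (t - w) (t - 1)).sup'
          (Finset.nonempty_Icc.mpr (Nat.sub_le_sub_left hw t)) b) →
      b N ≤ A / (1 - γ) + γ ^ L * B := by
  have h1γ : (0:ℝ) < 1 - γ := by linarith
  intro L
  induction L with
  | zero =>
    intro N hN hb _
    have := (hb N le_rfl).2
    have : b N ≤ B := this
    have hAd : 0 ≤ A / (1 - γ) := div_nonneg hA h1γ.le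
    simp only [pow_zero, one_mul]
    linarith
  | succ L ih =>
    intro N hN hb hrec
    have e1 : (L + 1) * w = L * w + w := by ring
    have e2 : (L + 1 + 1) * w = L * w + w + w := by ring
    have hwN : w ≤ N := le_trans (Nat.le_mul_of_pos_left w (Nat.succ_pos _)) hN
    have hsup : (Finset.Icc (N - w) (N - 1)).sup'
        (Finset.nonempty_Icc.mpr (Nat.sub_le_sub_left hw N)) b
        ≤ A / (1 - γ) + γ ^ L * B := by
      apply Finset.sup'_le
      intro i hi
      rw [Finset.mem_Icc] at hi
      obtain ⟨hi1, hi2⟩ := hi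
      have hiN : i ≤ N := le_trans hi2 (Nat.sub_le _ _)
      have hiw : (L + 1) * w ≤ i := by omega
      apply ih i hiw
      · intro j hj; exact hb j (le_trans hj hiN)
      · intro t ht1 ht2
        apply hrec t _ (le_trans ht2 hiN)
        have : N - (L + 1) * w ≤ i - L * w := by omega
        omega
    have hrecN := hrec N (by omega) le_rfl
    have : b N ≤ A + γ * (A / (1 - γ) + γ ^ L * B) :=
      le_trans hrecN (by nlinarith)
    have key : A + γ * (A / (1 - γ) + γ ^ L * B)
        = A / (1 - γ) + γ ^ (L + 1) * B := by
      field_simp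
      ring
    linarith [key ▸ this]

theorem windowed_recursion_bound
    (γ A B : ℝ) (hγ_nonneg : 0 ≤ γ) (hγ_lt : γ < 1)
    (hA : 0 ≤ A) (hB : 0 ≤ B)
    (w L N : ℕ) (hw : 1 ≤ w) (hN : (L + 1) * w ≤ N)
    (b : ℕ → ℝ)
    (hb : ∀ i ≤ N, 0 ≤ b i ∧ b i ≤ B)
    (hrec : ∀ t : ℕ, N - L * w < t → t ≤ N →
      b t ≤ A + γ * (Finset.Icc (t - w) (t - 1)).sup'
        (Finset.nonempty_Icc.mpr (Nat.sub_le_sub_left hw t)) b) :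
    b N ≤ A / (1 - γ) + γ ^ L * B :=
  windowed_aux γ A B hγ_nonneg hγ_lt hA hB w hw b L N hN hb hrec
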